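/- Let (H,R) be a quasi-triangular Hopf algebra over a field k, and let ZG(H) denote the set of central grouplike elements of H. Then there is a bijection between the set of isomorphism classes of one-dimensional Yetter-Drinfeld modules in _H^H YD and the set ZG(H) × {isomorphism classes of one-dimensional left H-modules}. Explicitly: every one-dimensional V = kv ∈ _H^H YD has H_R-coaction ρ_R(v) = g ⊗ v for a unique g ∈ ZG(H) and H-action given by an algebra map H → k; conversely every such pair (g, algebra map) arises from a one-dimensional Yetter-Drinfeld module, and two such modules are isomorphic iff their pairs coincide. -/

import Mathlib

open TensorProduct LinearMap

variable (K : Type) [Field K] (H : Type) [Ring H] [HopfAlgebra K H]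

/-- The left adjoint action as a linear map `H ⊗ H →ₗ H`, `h ⊗ a ↦ Σ h₍₁₎ * a * S(h₍₂₎)`. -/
noncomputable def adMap : H ⊗[K] H →ₗ[K] H :=
  (LinearMap.mul' K H) ∘ₗ
    (LinearMap.lTensor H ((LinearMap.mul' K H) ∘ₗ
      (LinearMap.lTensor H (HopfAlgebra.antipode (R := K))) ∘ₗ
      (TensorProduct.comm K H H).toLinearMap)) ∘ₗ
    (TensorProduct.assoc K H H H).toLinearMap ∘ₗ
    (LinearMap.rTensor H (Coalgebra.comul (R := K)))

/-- `h ·_ad a = Σ h₍₁₎ a S(h₍₂₎)`. -/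
noncomputable def adAct (h a : H) : H := adMap K H (h ⊗ₜ a)

/-- `R¹² = Σ r¹ ⊗ r² ⊗ 1` in `H ⊗ (H ⊗ H)`. -/
noncomputable def r12 (R : H ⊗[K] H) : H ⊗[K] (H ⊗[K] H) :=
  TensorProduct.map LinearMap.id ((TensorProduct.mk K H H).flip 1) R

/-- `R¹³ = Σ r¹ ⊗ 1 ⊗ r²` in `H ⊗ (H ⊗ H)`. -/
noncomputable def r13 (R : H ⊗[K] H) : H ⊗[K] (H ⊗[K] H) :=
  TensorProduct.map LinearMap.id (TensorProduct.mk K H H 1) R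

/-- `R²³ = 1 ⊗ R` in `H ⊗ (H ⊗ H)`. -/
noncomputable def r23 (R : H ⊗[K] H) : H ⊗[K] (H ⊗[K] H) := (1 : H) ⊗ₜ R

/-- `(H,R)` is a quasi-triangular Hopf algebra: `R` is invertible,
`R Δ(h) = Δᶜᵒᵖ(h) R`, `(Δ⊗id)(R) = R¹³R²³` and `(id⊗Δ)(R) = R¹³R¹²`. -/
structure IsQuasiTriangular (R : H ⊗[K] H) : Prop where
  isUnit : IsUnit R
  intertwine : ∀ h : H, R * Coalgebra.comul h =
    (TensorProduct.comm K H H) (Coalgebra.comul h) * R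
  comul_rTensor : (TensorProduct.assoc K H H H)
      ((LinearMap.rTensor H (Coalgebra.comul (R := K))) R) = r13 K H R * r23 K H R
  comul_lTensor : (LinearMap.lTensor H (Coalgebra.comul (R := K))) R = r13 K H R * r12 K H R

/-- The comultiplication `Δ_R` of the transmuted braided group `H_R`:
`Δ_R(h) = Σ h₍₁₎ S(R²) ⊗ R¹ ·_ad h₍₂₎`. -/
noncomputable def deltaR (R : H ⊗[K] H) : H →ₗ[K] H ⊗[K] H :=
  (TensorProduct.map
      ((LinearMap.mul' K H) ∘ₗ (LinearMap.lTensor H (HopfAlgebra.antipode (R := K))))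
      ((adMap K H) ∘ₗ (TensorProduct.comm K H H).toLinearMap)) ∘ₗ
    (TensorProduct.tensorTensorTensorComm K H H H H).toLinearMap ∘ₗ
    (LinearMap.lTensor (H ⊗[K] H) (TensorProduct.comm K H H).toLinearMap) ∘ₗ
    ((TensorProduct.mk K (H ⊗[K] H) (H ⊗[K] H)).flip R) ∘ₗ
    (Coalgebra.comul (R := K))

/-- `(h ⊗ h') ⊗ a ↦ h * a * S(h')`. -/
noncomputable def sandwich : (H ⊗[K] H) ⊗[K] H →ₗ[K] H :=
  (LinearMap.mul' K H) ∘ₗ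
    (LinearMap.lTensor H ((LinearMap.mul' K H) ∘ₗ
      (LinearMap.lTensor H (HopfAlgebra.antipode (R := K))) ∘ₗ
      (TensorProduct.comm K H H).toLinearMap)) ∘ₗ
    (TensorProduct.assoc K H H H).toLinearMap

/-- `h ↦ Σ (h₍₁₎ ⊗ h₍₃₎) ⊗ h₍₂₎`. -/
noncomputable def deltaYD : H →ₗ[K] (H ⊗[K] H) ⊗[K] H :=
  (TensorProduct.assoc K H H H).symm.toLinearMap ∘ₗ
    (LinearMap.lTensor H (TensorProduct.comm K H H).toLinearMap) ∘ₗ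
    (TensorProduct.assoc K H H H).toLinearMap ∘ₗ
    (LinearMap.rTensor H (Coalgebra.comul (R := K))) ∘ₗ
    (Coalgebra.comul (R := K))

/-- A left-left Yetter–Drinfeld module structure over `H` on the `K`-module `V`:
a left `H`-module structure (given by an algebra map `H → End V`), together with a
left `H`-comodule structure `ρ = coact`, satisfying the compatibility
`Σ (hv)₍₋₁₎ ⊗ (hv)₍₀₎ = Σ h₍₁₎ v₍₋₁₎ S(h₍₃₎) ⊗ h₍₂₎ v₍₀₎`. -/
structure YDStr (V : Type*) [AddCommGroup V] [Module K V] where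
  act : H →ₐ[K] Module.End K V
  coact : V →ₗ[K] H ⊗[K] V
  counit_coact : ∀ v : V,
    (TensorProduct.lid K V)
      ((LinearMap.rTensor V (Coalgebra.counit (R := K))) (coact v)) = v
  coassoc : (LinearMap.rTensor V (Coalgebra.comul (R := K))) ∘ₗ coact
      = (TensorProduct.assoc K H H V).symm.toLinearMap ∘ₗ
        (LinearMap.lTensor H coact) ∘ₗ coact
  yd : coact ∘ₗ (TensorProduct.lift act.toLinearMap)
      = (TensorProduct.map (sandwich K H) (TensorProduct.lift act.toLinearMap)) ∘ₗ
        (TensorProduct.tensorTensorTensorComm K (H ⊗[K] H) H H V).toLinearMap ∘ₗ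
        (TensorProduct.map (deltaYD K H) coact)

/-- A Yetter–Drinfeld module is irreducible if it is nonzero and has no nontrivial
subspace stable under the action and the coaction. -/
def YDIrreducible {V : Type*} [AddCommGroup V] [Module K V] (s : YDStr K H V) : Prop :=
  (⊥ : Submodule K V) ≠ ⊤ ∧
    ∀ W : Submodule K V, (∀ h : H, ∀ w ∈ W, s.act h w ∈ W) →
      (∀ w ∈ W, s.coact w ∈ Submodule.map₂ (TensorProduct.mk K H V) ⊤ W) →
      W = ⊥ ∨ W = ⊤

/-- An isomorphism of Yetter–Drinfeld modules. -/
def YDIsomorphic {V V' : Type*} [AddCommGroup V] [Module K V] [AddCommGroup V']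
    [Module K V'] (s : YDStr K H V) (s' : YDStr K H V') : Prop :=
  ∃ e : V ≃ₗ[K] V', (∀ (h : H) (v : V), e (s.act h v) = s'.act h (e v)) ∧
    (LinearMap.lTensor H e.toLinearMap) ∘ₗ s.coact = s'.coact ∘ₗ e.toLinearMap

/-- The `H_R`-comodule structure `ρ_R(v) = Σ v₍₋₁₎ S(R²) ⊗ R¹ v₍₀₎` associated with a
Yetter–Drinfeld module. -/
noncomputable def rhoR (R : H ⊗[K] H) {V : Type*} [AddCommGroup V] [Module K V]
    (s : YDStr K H V) : V →ₗ[K] H ⊗[K] V :=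
  (TensorProduct.map
      ((LinearMap.mul' K H) ∘ₗ (LinearMap.lTensor H (HopfAlgebra.antipode (R := K))))
      ((TensorProduct.lift s.act.toLinearMap) ∘ₗ (TensorProduct.comm K V H).toLinearMap)) ∘ₗ
    (TensorProduct.tensorTensorTensorComm K H V H H).toLinearMap ∘ₗ
    (LinearMap.lTensor (H ⊗[K] V) (TensorProduct.comm K H H).toLinearMap) ∘ₗ
    ((TensorProduct.mk K (H ⊗[K] V) (H ⊗[K] H)).flip R) ∘ₗ s.coact

/-- `g` is a central grouplike element of `H`. -/
def IsCentralGrouplike (g : H) : Prop :=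
  Coalgebra.comul (R := K) g = g ⊗ₜ g ∧ Coalgebra.counit (R := K) g = 1 ∧
    ∀ h : H, g * h = h * g

open Coalgebra HopfAlgebra

noncomputable section
namespace YDaux

variable {K} {H}

def conv (f g : H →ₗ[K] H) : H →ₗ[K] H :=
  LinearMap.mul' K H ∘ₗ TensorProduct.map f g ∘ₗ Coalgebra.comul

def convOne : H →ₗ[K] H := Algebra.linearMap K H ∘ₗ Coalgebra.counit

lemma conv_repr (f g : H →ₗ[K] H) (h : H) (r : Coalgebra.Repr K h (H × H)) :
    conv f g h = ∑ i ∈ r.index, f (r.left i) * g (r.right i) := by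
  simp [conv, ← r.eq, map_sum]

lemma sum_counit_smul (h : H) (r : Coalgebra.Repr K h (H × H)) :
    ∑ i ∈ r.index, Coalgebra.counit (R := K) (r.left i) • r.right i = h := by
  have := congrArg (TensorProduct.lid K H) (Coalgebra.sum_counit_tmul_eq r)
  simpa only [map_sum, TensorProduct.lid_tmul, one_smul] using this

lemma sum_smul_counit (h : H) (r : Coalgebra.Repr K h (H × H)) :
    ∑ i ∈ r.index, Coalgebra.counit (R := K) (r.right i) • r.left i = h := by
  have := congrArg (TensorProduct.rid K H) (Coalgebra.sum_tmul_counit_eq r)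
  simpa only [map_sum, TensorProduct.rid_tmul, one_smul] using this

lemma conv_one (f : H →ₗ[K] H) : conv f convOne = f := by
  ext h
  set r := Coalgebra.Repr.arbitrary K h with hr
  rw [conv_repr f convOne h r]
  conv_rhs => rw [← sum_smul_counit h r, map_sum]
  refine Finset.sum_congr rfl fun i _ => ?_
  simp only [convOne, LinearMap.coe_comp, Function.comp_apply, Algebra.linearMap_apply,
    ← Algebra.commutes, ← Algebra.smul_def]
  exact (map_smul f _ _).symm

lemma one_conv (f : H →ₗ[K] H) : conv convOne f = f := by
  ext h
  set r := Coalgebra.Repr.arbitrary K h with hr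
  rw [conv_repr convOne f h r]
  conv_rhs => rw [← sum_counit_smul h r, map_sum]
  refine Finset.sum_congr rfl fun i _ => ?_
  simp only [convOne, LinearMap.coe_comp, Function.comp_apply, Algebra.linearMap_apply,
    ← Algebra.smul_def]
  exact (map_smul f _ _).symm



def tri (f g k : H →ₗ[K] H) : H ⊗[K] (H ⊗[K] H) →ₗ[K] H :=
  LinearMap.mul' K H ∘ₗ
    TensorProduct.map f (LinearMap.mul' K H ∘ₗ TensorProduct.map g k)

lemma tri_apply (f g k : H →ₗ[K] H) (x y z : H) :
    tri f g k (x ⊗ₜ[K] (y ⊗ₜ[K] z)) = f x * (g y * k z) := by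
  simp [tri]

lemma conv_assoc (f g k : H →ₗ[K] H) : conv (conv f g) k = conv f (conv g k) := by
  ext h
  set r := Coalgebra.Repr.arbitrary K h with hrdef
  have key := congrArg (tri f g k)
    (Coalgebra.sum_tmul_tmul_eq r (fun i => Coalgebra.Repr.arbitrary K (r.left i))
      (fun i => Coalgebra.Repr.arbitrary K (r.right i)))
  simp only [map_sum, tri_apply] at key
  have lhs : conv (conv f g) k h
      = ∑ i ∈ r.index, ∑ j ∈ (Coalgebra.Repr.arbitrary K (r.left i)).index,
        f ((Coalgebra.Repr.arbitrary K (r.left i)).left j) *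
          (g ((Coalgebra.Repr.arbitrary K (r.left i)).right j) * k (r.right i)) := by
    rw [conv_repr _ k h r]
    refine Finset.sum_congr rfl fun i _ => ?_
    rw [conv_repr f g _ (Coalgebra.Repr.arbitrary K (r.left i)), Finset.sum_mul]
    exact Finset.sum_congr rfl fun j _ => by rw [mul_assoc]
  have rhs : conv f (conv g k) h
      = ∑ i ∈ r.index, ∑ j ∈ (Coalgebra.Repr.arbitrary K (r.right i)).index,
        f (r.left i) *
          (g ((Coalgebra.Repr.arbitrary K (r.right i)).left j) *
            k ((Coalgebra.Repr.arbitrary K (r.right i)).right j)) := by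
    rw [conv_repr f _ h r]
    refine Finset.sum_congr rfl fun i _ => ?_
    rw [conv_repr g k _ (Coalgebra.Repr.arbitrary K (r.right i)), Finset.mul_sum]
  rw [lhs, rhs, key]

lemma conv_id_antipode :
    conv (LinearMap.id) (HopfAlgebra.antipode (R := K) (A := H)) = convOne := by
  ext h
  rw [conv_repr _ _ h (Coalgebra.Repr.arbitrary K h)]
  simp [convOne, HopfAlgebra.sum_mul_antipode_eq_algebraMap_counit]

lemma conv_antipode_id :
    conv (HopfAlgebra.antipode (R := K) (A := H)) LinearMap.id = convOne := by
  ext h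
  rw [conv_repr _ _ h (Coalgebra.Repr.arbitrary K h)]
  simp [convOne, HopfAlgebra.sum_antipode_mul_eq_algebraMap_counit]
/-- `h ↦ τ(h)1`. -/
def Tc (τ : H →ₐ[K] K) : H →ₗ[K] H := Algebra.linearMap K H ∘ₗ τ.toLinearMap
/-- `h ↦ τ(S h)1`. -/
def Tc' (τ : H →ₐ[K] K) : H →ₗ[K] H := Tc τ ∘ₗ HopfAlgebra.antipode (R := K)
/-- `h ↦ Σ τ(h₂) • h₁`. -/
def phi (τ : H →ₐ[K] K) : H →ₗ[K] H := conv LinearMap.id (Tc τ)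
/-- `h ↦ Σ τ(h₁) • h₂`. -/
def psi (τ : H →ₐ[K] K) : H →ₗ[K] H := conv (Tc τ) LinearMap.id

lemma phi_repr (τ : H →ₐ[K] K) (h : H) (r : Coalgebra.Repr K h (H × H)) :
    phi τ h = ∑ i ∈ r.index, τ (r.right i) • r.left i := by
  rw [phi, conv_repr _ _ h r]
  refine Finset.sum_congr rfl fun i _ => ?_
  simp [Tc, ← Algebra.commutes, Algebra.smul_def]

lemma psi_repr (τ : H →ₐ[K] K) (h : H) (r : Coalgebra.Repr K h (H × H)) :
    psi τ h = ∑ i ∈ r.index, τ (r.left i) • r.right i := by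
  rw [psi, conv_repr _ _ h r]
  refine Finset.sum_congr rfl fun i _ => ?_
  simp [Tc, Algebra.smul_def]

lemma conv_Tc_Tc' (τ : H →ₐ[K] K) : conv (Tc τ) (Tc' τ) = convOne := by
  ext h
  rw [conv_repr _ _ h (Coalgebra.Repr.arbitrary K h)]
  have : ∀ i ∈ (Coalgebra.Repr.arbitrary K h).index,
      Tc τ ((Coalgebra.Repr.arbitrary K h).left i) *
        Tc' τ ((Coalgebra.Repr.arbitrary K h).right i)
      = algebraMap K H (τ ((Coalgebra.Repr.arbitrary K h).left i *
          HopfAlgebra.antipode (R := K) ((Coalgebra.Repr.arbitrary K h).right i))) := by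
    intro i _
    simp [Tc, Tc', map_mul]
  rw [Finset.sum_congr rfl this, ← map_sum, ← map_sum,
    HopfAlgebra.sum_mul_antipode_eq_algebraMap_counit (Coalgebra.Repr.arbitrary K h)]
  simp [convOne]

lemma conv_Tc'_Tc (τ : H →ₐ[K] K) : conv (Tc' τ) (Tc τ) = convOne := by
  ext h
  rw [conv_repr _ _ h (Coalgebra.Repr.arbitrary K h)]
  have : ∀ i ∈ (Coalgebra.Repr.arbitrary K h).index,
      Tc' τ ((Coalgebra.Repr.arbitrary K h).left i) *
        Tc τ ((Coalgebra.Repr.arbitrary K h).right i)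
      = algebraMap K H (τ (HopfAlgebra.antipode (R := K)
            ((Coalgebra.Repr.arbitrary K h).left i) *
          (Coalgebra.Repr.arbitrary K h).right i)) := by
    intro i _
    simp [Tc, Tc', map_mul]
  rw [Finset.sum_congr rfl this, ← map_sum, ← map_sum,
    HopfAlgebra.sum_antipode_mul_eq_algebraMap_counit (Coalgebra.Repr.arbitrary K h)]
  simp [convOne]

lemma conv_phi_Tc' (τ : H →ₐ[K] K) : conv (phi τ) (Tc' τ) = LinearMap.id := by
  rw [phi, conv_assoc, conv_Tc_Tc', conv_one]

lemma conv_Tc'_psi (τ : H →ₐ[K] K) : conv (Tc' τ) (psi τ) = LinearMap.id := by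
  rw [psi, ← conv_assoc, conv_Tc'_Tc, one_conv]

section Grouplike

variable {g g' : H}

lemma antipode_mul_self (hg : Coalgebra.comul (R := K) g = g ⊗ₜ g)
    (he : Coalgebra.counit (R := K) g = 1) :
    HopfAlgebra.antipode (R := K) g * g = 1 := by
  have := HopfAlgebra.mul_antipode_rTensor_comul_apply (R := K) g
  rw [hg, he] at this
  simpa using this

lemma self_mul_antipode (hg : Coalgebra.comul (R := K) g = g ⊗ₜ g)
    (he : Coalgebra.counit (R := K) g = 1) :
    g * HopfAlgebra.antipode (R := K) g = 1 := by
  have := HopfAlgebra.mul_antipode_lTensor_comul_apply (R := K) g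
  rw [hg, he] at this
  simpa using this

lemma comul_one' : Coalgebra.comul (R := K) (1 : H) = 1 :=
  map_one (Bialgebra.comulAlgHom K H)

lemma counit_one' : Coalgebra.counit (R := K) (1 : H) = 1 :=
  map_one (Bialgebra.counitAlgHom K H)

lemma comul_grouplike_antipode (hg : Coalgebra.comul (R := K) g = g ⊗ₜ g)
    (he : Coalgebra.counit (R := K) g = 1) :
    Coalgebra.comul (R := K) (HopfAlgebra.antipode (R := K) g) =
      HopfAlgebra.antipode (R := K) g ⊗ₜ HopfAlgebra.antipode (R := K) g := by
  set Sg := HopfAlgebra.antipode (R := K) g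
  have e1 : Coalgebra.comul (R := K) Sg * (g ⊗ₜ[K] g) = 1 := by
    rw [← hg, ← Bialgebra.comul_mul, antipode_mul_self hg he, comul_one']
  have e3 : (g ⊗ₜ[K] g) * (Sg ⊗ₜ[K] Sg) = 1 := by
    rw [Algebra.TensorProduct.tmul_mul_tmul, self_mul_antipode hg he,
      Algebra.TensorProduct.one_def]
  calc Coalgebra.comul (R := K) Sg
      = Coalgebra.comul (R := K) Sg * ((g ⊗ₜ[K] g) * (Sg ⊗ₜ[K] Sg)) := by rw [e3, mul_one]
    _ = (Coalgebra.comul (R := K) Sg * (g ⊗ₜ[K] g)) * (Sg ⊗ₜ[K] Sg) := by rw [mul_assoc]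
    _ = Sg ⊗ₜ[K] Sg := by rw [e1, one_mul]

lemma counit_grouplike_antipode (hg : Coalgebra.comul (R := K) g = g ⊗ₜ g)
    (he : Coalgebra.counit (R := K) g = 1) :
    Coalgebra.counit (R := K) (HopfAlgebra.antipode (R := K) g) = 1 := by
  have : Coalgebra.counit (R := K) (HopfAlgebra.antipode (R := K) g * g) = 1 := by
    rw [antipode_mul_self hg he, counit_one']
  rw [Bialgebra.counit_mul, he, mul_one] at this
  exact this

lemma comul_grouplike_mul (hg : Coalgebra.comul (R := K) g = g ⊗ₜ g)
    (hg' : Coalgebra.comul (R := K) g' = g' ⊗ₜ g') :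
    Coalgebra.comul (R := K) (g * g') = (g * g') ⊗ₜ (g * g') := by
  rw [Bialgebra.comul_mul, hg, hg', Algebra.TensorProduct.tmul_mul_tmul]

lemma counit_grouplike_mul (he : Coalgebra.counit (R := K) g = 1)
    (he' : Coalgebra.counit (R := K) g' = 1) :
    Coalgebra.counit (R := K) (g * g') = 1 := by
  rw [Bialgebra.counit_mul, he, he', mul_one]

end Grouplike
/-- apply `τ` to the first tensor leg: `x ⊗ y ↦ τ(x) • y`. -/
def tauCol (τ : H →ₐ[K] K) : H ⊗[K] H →ₐ[K] H :=
  (Algebra.TensorProduct.lid K H).toAlgHom.comp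
    (Algebra.TensorProduct.map τ (AlgHom.id K H))

@[simp] lemma tauCol_tmul (τ : H →ₐ[K] K) (x y : H) :
    tauCol τ (x ⊗ₜ[K] y) = τ x • y := by
  simp [tauCol]

lemma tauCol_comul (τ : H →ₐ[K] K) (h : H) :
    tauCol τ (Coalgebra.comul (R := K) h) = psi τ h := by
  rw [psi_repr τ h (Coalgebra.Repr.arbitrary K h), ← (Coalgebra.Repr.arbitrary K h).eq,
    map_sum]
  simp

lemma tauCol_comm_comul (τ : H →ₐ[K] K) (h : H) :
    tauCol τ (TensorProduct.comm K H H (Coalgebra.comul (R := K) h)) = phi τ h := by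
  rw [phi_repr τ h (Coalgebra.Repr.arbitrary K h), ← (Coalgebra.Repr.arbitrary K h).eq,
    map_sum, map_sum]
  simp

variable {R : H ⊗[K] H}

lemma phi_mul_v (hR : IsQuasiTriangular K H R) (τ : H →ₐ[K] K) (h : H) :
    phi τ h * tauCol τ R = tauCol τ R * psi τ h := by
  have := congrArg (tauCol τ) (hR.intertwine h)
  rw [map_mul, map_mul, tauCol_comul, tauCol_comm_comul] at this
  exact this.symm

def tauCol₂ (τ : H →ₐ[K] K) : H ⊗[K] (H ⊗[K] H) →ₐ[K] H ⊗[K] H :=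
  (Algebra.TensorProduct.lid K (H ⊗[K] H)).toAlgHom.comp
    (Algebra.TensorProduct.map τ (AlgHom.id K (H ⊗[K] H)))

@[simp] lemma tauCol₂_tmul (τ : H →ₐ[K] K) (x : H) (w : H ⊗[K] H) :
    tauCol₂ τ (x ⊗ₜ[K] w) = τ x • w := by
  simp [tauCol₂]

lemma comul_v (hR : IsQuasiTriangular K H R) (τ : H →ₐ[K] K) :
    Coalgebra.comul (R := K) (tauCol τ R) = tauCol τ R ⊗ₜ[K] tauCol τ R := by
  have key := congrArg (tauCol₂ τ) hR.comul_lTensor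
  have l1 : ∀ t : H ⊗[K] H, tauCol₂ τ ((LinearMap.lTensor H (Coalgebra.comul (R := K))) t)
      = Coalgebra.comul (R := K) (tauCol τ t) := by
    intro t
    induction t using TensorProduct.induction_on with
    | zero => simp
    | tmul x y => simp [map_smul]
    | add a b ha hb => simp [map_add, ha, hb]
  have l2 : ∀ t : H ⊗[K] H,
      tauCol₂ τ (TensorProduct.map LinearMap.id (TensorProduct.mk K H H 1) t)
        = (1 : H) ⊗ₜ[K] tauCol τ t := by
    intro t
    induction t using TensorProduct.induction_on with
    | zero => simp
    | tmul x y => simp [tmul_smul]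
    | add a b ha hb => simp only [map_add, ha, hb, tmul_add]
  have l3 : ∀ t : H ⊗[K] H,
      tauCol₂ τ (TensorProduct.map LinearMap.id ((TensorProduct.mk K H H).flip 1) t)
        = tauCol τ t ⊗ₜ[K] (1 : H) := by
    intro t
    induction t using TensorProduct.induction_on with
    | zero => simp
    | tmul x y => simp [smul_tmul']
    | add a b ha hb => simp only [map_add, ha, hb, add_tmul]
  simp only [r13, r12] at key
  rw [l1, map_mul, l2, l3, Algebra.TensorProduct.tmul_mul_tmul, one_mul, mul_one] at key
  exact key

def Jmap : H ⊗[K] H →ₗ[K] H ⊗[K] H :=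
  TensorProduct.map LinearMap.id (Algebra.linearMap K H ∘ₗ Coalgebra.counit)

def XiA : H ⊗[K] (H ⊗[K] H) →ₐ[K] H ⊗[K] H :=
  Algebra.TensorProduct.map (AlgHom.id K H)
    ((Algebra.TensorProduct.lid K H).toAlgHom.comp
      (Algebra.TensorProduct.map (Bialgebra.counitAlgHom K H) (AlgHom.id K H)))

@[simp] lemma XiA_tmul (x y z : H) :
    XiA (x ⊗ₜ[K] (y ⊗ₜ[K] z)) = x ⊗ₜ[K] (Coalgebra.counit (R := K) y • z) := by
  simp [XiA]

lemma XiA_comul (x y : H) :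
    XiA (x ⊗ₜ[K] (Coalgebra.comul (R := K) y)) = x ⊗ₜ[K] y := by
  rw [← (Coalgebra.Repr.arbitrary K y).eq, tmul_sum, map_sum]
  simp only [XiA_tmul, ← tmul_sum]
  rw [sum_counit_smul y (Coalgebra.Repr.arbitrary K y)]

lemma JR_one (hR : IsQuasiTriangular K H R) : Jmap R = 1 := by
  have key := congrArg XiA hR.comul_lTensor
  have l1 : ∀ t : H ⊗[K] H, XiA ((LinearMap.lTensor H (Coalgebra.comul (R := K))) t) = t := by
    intro t
    induction t using TensorProduct.induction_on with
    | zero => simp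
    | tmul x y => exact XiA_comul x y
    | add a b ha hb => simp only [map_add, ha, hb]
  have l2 : ∀ t : H ⊗[K] H,
      XiA (TensorProduct.map LinearMap.id (TensorProduct.mk K H H 1) t) = t := by
    intro t
    induction t using TensorProduct.induction_on with
    | zero => simp
    | tmul x y => simp [counit_one']
    | add a b ha hb => simp only [map_add, ha, hb]
  have l3 : ∀ t : H ⊗[K] H,
      XiA (TensorProduct.map LinearMap.id ((TensorProduct.mk K H H).flip 1) t) = Jmap t := by
    intro t
    induction t using TensorProduct.induction_on with
    | zero => simp [Jmap]
    | tmul x y => simp [Jmap, Algebra.smul_def]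
    | add a b ha hb => simp only [map_add, ha, hb]
  simp only [r13, r12] at key
  rw [l1, map_mul, l2, l3] at key
  exact (hR.isUnit.mul_left_cancel (by rw [mul_one, ← key]) : Jmap R = 1)

lemma counit_v (hR : IsQuasiTriangular K H R) (τ : H →ₐ[K] K) :
    Coalgebra.counit (R := K) (tauCol τ R) = 1 := by
  set χ := (Bialgebra.counitAlgHom K H).comp (tauCol τ) with hχ
  have claim : ∀ t : H ⊗[K] H, χ (Jmap t) = χ t := by
    intro t
    induction t using TensorProduct.induction_on with
    | zero => simp
    | tmul x y => simp [χ, Jmap, Algebra.smul_def]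
    | add a b ha hb => simp only [map_add, ha, hb]
  have : χ R = 1 := by
    have := claim R
    rw [JR_one hR, map_one] at this
    exact this.symm
  simpa [χ] using this
/-- `x ⊗ y ↦ x * f * S(y)`. -/
def sandMap (f : H) : H ⊗[K] H →ₗ[K] H :=
  TensorProduct.lift (LinearMap.mk₂ K (fun x y => x * f * HopfAlgebra.antipode (R := K) y)
    (fun x x' y => by rw [add_mul, add_mul])
    (fun c x y => by rw [smul_mul_assoc, smul_mul_assoc])
    (fun x y y' => by rw [map_add, mul_add])
    (fun c x y => by rw [map_smul, mul_smul_comm]))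

@[simp] lemma sandMap_tmul (f x y : H) :
    sandMap f (x ⊗ₜ[K] y) = x * f * HopfAlgebra.antipode (R := K) y := rfl

/-- `(x ⊗ y) ⊗ z ↦ τ(z) • (x * f * S(y))`. -/
def psiMapE (f : H) (τ : H →ₐ[K] K) : (H ⊗[K] H) ⊗[K] H →ₗ[K] H :=
  TensorProduct.lift
    { toFun := fun w => LinearMap.smulRight τ.toLinearMap (sandMap f w)
      map_add' := fun w w' => by
        ext z; simp only [map_add, smul_add, LinearMap.smulRight_apply, LinearMap.add_apply]
      map_smul' := fun c w => by
        ext z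
        simp only [map_smul, LinearMap.smulRight_apply, RingHom.id_apply,
          LinearMap.smul_apply]
        rw [smul_comm] }

@[simp] lemma psiMapE_tmul (f : H) (τ : H →ₐ[K] K) (x y z : H) :
    psiMapE f τ ((x ⊗ₜ[K] y) ⊗ₜ[K] z)
      = τ z • (x * f * HopfAlgebra.antipode (R := K) y) := rfl

variable (K H) in
/-- The Yetter–Drinfeld expression `h ↦ Σ τ(h₂) • (h₁ * f * S(h₃))`. -/
def Efun (f : H) (τ : H →ₐ[K] K) : H →ₗ[K] H := psiMapE f τ ∘ₗ deltaYD K H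

lemma deltaYD_repr (h : H) (r : Coalgebra.Repr K h (H × H))
    (a₁ : (i : r.ι) → Coalgebra.Repr K (r.left i) (H × H)) :
    deltaYD K H h = ∑ i ∈ r.index, ∑ j ∈ (a₁ i).index,
      ((a₁ i).left j ⊗ₜ[K] r.right i) ⊗ₜ[K] (a₁ i).right j := by
  rw [deltaYD]
  simp only [LinearMap.coe_comp, Function.comp_apply, LinearEquiv.coe_coe]
  rw [← r.eq, map_sum]
  simp only [LinearMap.rTensor_tmul]
  have : ∀ i ∈ r.index, (Coalgebra.comul (R := K) (r.left i)) ⊗ₜ[K] r.right i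
      = ∑ j ∈ (a₁ i).index, ((a₁ i).left j ⊗ₜ[K] (a₁ i).right j) ⊗ₜ[K] r.right i := by
    intro i _
    rw [← (a₁ i).eq, sum_tmul]
  rw [Finset.sum_congr rfl this]
  simp only [map_sum, LinearEquiv.coe_coe, TensorProduct.assoc_tmul, LinearMap.lTensor_tmul,
    TensorProduct.comm_tmul, TensorProduct.assoc_symm_tmul]

lemma Efun_repr (f : H) (τ : H →ₐ[K] K) (h : H) (r : Coalgebra.Repr K h (H × H))
    (a₁ : (i : r.ι) → Coalgebra.Repr K (r.left i) (H × H)) :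
    Efun K H f τ h = ∑ i ∈ r.index, ∑ j ∈ (a₁ i).index,
      τ ((a₁ i).right j) •
        ((a₁ i).left j * f * HopfAlgebra.antipode (R := K) (r.right i)) := by
  rw [Efun, LinearMap.comp_apply, deltaYD_repr h r a₁, map_sum]
  exact Finset.sum_congr rfl fun i _ => by rw [map_sum]; rfl

lemma conv_mulRight_Tc (f : H) (τ : H →ₐ[K] K) :
    conv (LinearMap.mulRight K f) (Tc τ) = LinearMap.mulRight K f ∘ₗ phi τ := by
  ext h
  rw [conv_repr _ _ h (Coalgebra.Repr.arbitrary K h)]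
  simp only [LinearMap.coe_comp, Function.comp_apply, LinearMap.mulRight_apply,
    phi_repr τ h (Coalgebra.Repr.arbitrary K h), Finset.sum_mul]
  refine Finset.sum_congr rfl fun i _ => ?_
  simp only [Tc, LinearMap.coe_comp, Function.comp_apply, AlgHom.toLinearMap_apply,
    Algebra.linearMap_apply, smul_mul_assoc]
  rw [← Algebra.commutes, ← Algebra.smul_def]

lemma conv_Tf_id (f : H) (τ : H →ₐ[K] K) :
    conv (LinearMap.smulRight τ.toLinearMap f) LinearMap.id
      = LinearMap.mulLeft K f ∘ₗ psi τ := by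
  ext h
  rw [conv_repr _ _ h (Coalgebra.Repr.arbitrary K h)]
  simp only [LinearMap.coe_comp, Function.comp_apply, LinearMap.mulLeft_apply,
    psi_repr τ h (Coalgebra.Repr.arbitrary K h), Finset.mul_sum]
  refine Finset.sum_congr rfl fun i _ => ?_
  simp [mul_smul_comm, smul_mul_assoc]

lemma tw_of_E {f : H} {τ : H →ₐ[K] K} (hE : ∀ h, Efun K H f τ h = τ h • f) :
    ∀ h, phi τ h * f = f * psi τ h := by
  have hE' : Efun K H f τ = LinearMap.smulRight τ.toLinearMap f := by
    ext h; simpa using hE h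
  have hconv : Efun K H f τ
      = conv (conv (LinearMap.mulRight K f) (Tc τ)) (HopfAlgebra.antipode (R := K)) := by
    ext h
    rw [Efun_repr f τ h (Coalgebra.Repr.arbitrary K h)
      (fun i => Coalgebra.Repr.arbitrary K _),
      conv_repr _ _ h (Coalgebra.Repr.arbitrary K h)]
    refine Finset.sum_congr rfl fun i _ => ?_
    rw [conv_repr _ _ _ (Coalgebra.Repr.arbitrary K ((Coalgebra.Repr.arbitrary K h).left i)),
      Finset.sum_mul]
    refine Finset.sum_congr rfl fun j _ => ?_
    simp only [LinearMap.mulRight_apply, Tc, LinearMap.coe_comp, Function.comp_apply,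
      AlgHom.toLinearMap_apply, Algebra.linearMap_apply]
    rw [← Algebra.commutes, ← Algebra.smul_def, smul_mul_assoc]
  have key : conv (conv (LinearMap.mulRight K f) (Tc τ)) (HopfAlgebra.antipode (R := K))
      = LinearMap.smulRight τ.toLinearMap f := by rw [← hconv, hE']
  have key2 := congrArg (fun X => conv X LinearMap.id) key
  simp only [conv_assoc, conv_antipode_id, conv_one] at key2
  rw [conv_mulRight_Tc, conv_Tf_id] at key2
  intro h
  exact LinearMap.congr_fun key2 h

lemma E_of_tw {f : H} {τ : H →ₐ[K] K} (htw : ∀ h, phi τ h * f = f * psi τ h) :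
    ∀ h, Efun K H f τ h = τ h • f := by
  have hconv : Efun K H f τ
      = conv (conv (LinearMap.mulRight K f) (Tc τ)) (HopfAlgebra.antipode (R := K)) := by
    ext h
    rw [Efun_repr f τ h (Coalgebra.Repr.arbitrary K h)
      (fun i => Coalgebra.Repr.arbitrary K _),
      conv_repr _ _ h (Coalgebra.Repr.arbitrary K h)]
    refine Finset.sum_congr rfl fun i _ => ?_
    rw [conv_repr _ _ _ (Coalgebra.Repr.arbitrary K ((Coalgebra.Repr.arbitrary K h).left i)),
      Finset.sum_mul]
    refine Finset.sum_congr rfl fun j _ => ?_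
    simp only [LinearMap.mulRight_apply, Tc, LinearMap.coe_comp, Function.comp_apply,
      AlgHom.toLinearMap_apply, Algebra.linearMap_apply]
    rw [← Algebra.commutes, ← Algebra.smul_def, smul_mul_assoc]
  have e1 : conv (LinearMap.mulRight K f) (Tc τ)
      = conv (LinearMap.smulRight τ.toLinearMap f) LinearMap.id := by
    rw [conv_mulRight_Tc, conv_Tf_id]
    ext h
    simpa using htw h
  intro h
  rw [hconv, e1, conv_assoc, conv_id_antipode, conv_one]
  simp

lemma central_of_tw {f w : H} {τ : H →ₐ[K] K}
    (hwΔ : Coalgebra.comul (R := K) w = w ⊗ₜ w) (hwε : Coalgebra.counit (R := K) w = 1)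
    (twf : ∀ h, phi τ h * f = f * psi τ h) (tww : ∀ h, phi τ h * w = w * psi τ h) :
    ∀ h : H, (f * HopfAlgebra.antipode (R := K) w) * h
      = h * (f * HopfAlgebra.antipode (R := K) w) := by
  intro h
  set Sw := HopfAlgebra.antipode (R := K) w with hSw
  have hsw : Sw * w = 1 := antipode_mul_self hwΔ hwε
  have hws : w * Sw = 1 := self_mul_antipode hwΔ hwε
  have step1 : ∀ k, Sw * phi τ k = psi τ k * Sw := by
    intro k
    calc Sw * phi τ k = (Sw * phi τ k) * (w * Sw) := by rw [hws, mul_one]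
      _ = Sw * ((phi τ k * w) * Sw) := by
            rw [mul_assoc Sw (phi τ k) (w * Sw), ← mul_assoc (phi τ k) w Sw]
      _ = Sw * ((w * psi τ k) * Sw) := by rw [tww k]
      _ = ((Sw * w) * psi τ k) * Sw := by
            rw [← mul_assoc Sw (w * psi τ k) Sw, ← mul_assoc Sw w (psi τ k)]
      _ = psi τ k * Sw := by rw [hsw, one_mul]
  set r := Coalgebra.Repr.arbitrary K h with hr
  have hid : ∑ i ∈ r.index,
      τ (HopfAlgebra.antipode (R := K) (r.right i)) • phi τ (r.left i) = h := by
    have hc := LinearMap.congr_fun (conv_phi_Tc' τ) h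
    rw [conv_repr _ _ h r] at hc
    simp only [LinearMap.id_coe, id_eq] at hc
    refine (Finset.sum_congr rfl fun i _ => ?_).trans hc
    simp only [Tc', Tc, LinearMap.coe_comp, Function.comp_apply, AlgHom.toLinearMap_apply,
      Algebra.linearMap_apply]
    rw [← Algebra.commutes, ← Algebra.smul_def]
  calc (f * Sw) * h
      = ∑ i ∈ r.index, τ (HopfAlgebra.antipode (R := K) (r.right i))
          • ((f * Sw) * phi τ (r.left i)) := by
        conv_lhs => rw [← hid]
        rw [Finset.mul_sum]
        exact Finset.sum_congr rfl fun i _ => by rw [mul_smul_comm]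
    _ = ∑ i ∈ r.index, τ (HopfAlgebra.antipode (R := K) (r.right i))
          • (phi τ (r.left i) * (f * Sw)) := by
        refine Finset.sum_congr rfl fun i _ => ?_
        congr 1
        calc (f * Sw) * phi τ (r.left i) = f * (Sw * phi τ (r.left i)) := by rw [mul_assoc]
          _ = f * (psi τ (r.left i) * Sw) := by rw [step1]
          _ = (f * psi τ (r.left i)) * Sw := by rw [mul_assoc]
          _ = (phi τ (r.left i) * f) * Sw := by rw [twf]
          _ = phi τ (r.left i) * (f * Sw) := by rw [mul_assoc]
    _ = h * (f * Sw) := by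
        conv_rhs => rw [← hid]
        rw [Finset.sum_mul]
        exact Finset.sum_congr rfl fun i _ => by rw [smul_mul_assoc]
variable {V : Type} [AddCommGroup V] [Module K V]

lemma one_dim_pack (hV : Module.finrank K V = 1) :
    ∃ (v₀ : V) (π : V →ₗ[K] K), π v₀ = 1 ∧ ∀ w : V, π w • v₀ = w := by
  let b := Module.basisUnique Unit hV
  refine ⟨b default, b.coord default, ?_, ?_⟩
  · simp [Module.Basis.coord_apply]
  · intro w
    have hb := b.sum_repr w
    simpa [Module.Basis.coord_apply] using hb

lemma vec_decomp {M : Type} [AddCommGroup M] [Module K M] {v₀ : V} {π : V →ₗ[K] K}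
    (hπ : ∀ w : V, π w • v₀ = w) (t : M ⊗[K] V) :
    t = (TensorProduct.rid K M) ((LinearMap.lTensor M π) t) ⊗ₜ[K] v₀ := by
  induction t using TensorProduct.induction_on with
  | zero => simp
  | tmul x w =>
    simp only [LinearMap.lTensor_tmul, TensorProduct.rid_tmul, smul_tmul']
    rw [smul_tmul, hπ w]
  | add a b ha hb => rw [map_add, map_add, add_tmul, ← ha, ← hb]

lemma tmul_right_inj {M : Type} [AddCommGroup M] [Module K M] {u : V} (π : V →ₗ[K] K)
    (hπ1 : π u = 1) {x y : M} (h : x ⊗ₜ[K] u = y ⊗ₜ[K] u) : x = y := by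
  have := congrArg (fun t => (TensorProduct.rid K M) ((LinearMap.lTensor M π) t)) h
  simpa [hπ1] using this

lemma smul_right_inj {u : V} (π : V →ₗ[K] K) (hπ1 : π u = 1) {a b : K}
    (h : a • u = b • u) : a = b := by
  have := congrArg π h
  simpa [map_smul, hπ1] using this

/-- the character of a 1-dimensional module. -/
def charOf (s : YDStr K H V) (v₀ : V) (π : V →ₗ[K] K) (hπ1 : π v₀ = 1)
    (hπ : ∀ w : V, π w • v₀ = w) : H →ₐ[K] K :=
  AlgHom.ofLinearMap
    { toFun := fun h => π (s.act h v₀)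
      map_add' := fun h h' => by simp only [map_add, LinearMap.add_apply, map_add]
      map_smul' := fun c h => by
        simp only [map_smul, LinearMap.smul_apply, RingHom.id_apply, smul_eq_mul] }
    (by simp only [LinearMap.coe_mk, AddHom.coe_mk, map_one, Module.End.one_apply, hπ1])
    (by
      intro h h'
      simp only [LinearMap.coe_mk, AddHom.coe_mk, map_mul, Module.End.mul_apply]
      conv_lhs => rw [← hπ (s.act h' v₀)]
      rw [map_smul, map_smul, smul_eq_mul, mul_comm])

lemma charOf_act (s : YDStr K H V) (v₀ : V) (π : V →ₗ[K] K) (hπ1 : π v₀ = 1)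
    (hπ : ∀ w : V, π w • v₀ = w) :
    ∀ (h : H) (w : V), s.act h w = charOf s v₀ π hπ1 hπ h • w := by
  intro h w
  have hv : s.act h v₀ = charOf s v₀ π hπ1 hπ h • v₀ := (hπ (s.act h v₀)).symm
  conv_lhs => rw [← hπ w]
  rw [map_smul, hv, smul_comm, hπ w]

lemma counit_f (s : YDStr K H V) (v₀ : V) (π : V →ₗ[K] K) (hπ1 : π v₀ = 1)
    {f : H} (hco : s.coact v₀ = f ⊗ₜ[K] v₀) :
    Coalgebra.counit (R := K) f = 1 := by
  have := s.counit_coact v₀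
  rw [hco] at this
  simp only [LinearMap.rTensor_tmul, TensorProduct.lid_tmul] at this
  have := congrArg π this
  simpa [map_smul, hπ1] using this

lemma comul_f (s : YDStr K H V) (v₀ : V) (π : V →ₗ[K] K) (hπ1 : π v₀ = 1)
    {f : H} (hco : s.coact v₀ = f ⊗ₜ[K] v₀) :
    Coalgebra.comul (R := K) f = f ⊗ₜ[K] f := by
  have := LinearMap.congr_fun s.coassoc v₀
  simp only [LinearMap.coe_comp, Function.comp_apply, LinearEquiv.coe_coe] at this
  rw [hco] at this
  simp only [LinearMap.rTensor_tmul, LinearMap.lTensor_tmul, hco,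
    TensorProduct.assoc_symm_tmul] at this
  exact tmul_right_inj π hπ1 this

set_option synthInstance.maxHeartbeats 1000000 in
set_option maxHeartbeats 1000000 in
lemma yd_rhs_eval (act : H →ₐ[K] Module.End K V) (τ : H →ₐ[K] K)
    (hact : ∀ (h : H) (w : V), act h w = τ h • w) (f : H) (u : V)
    (t : (H ⊗[K] H) ⊗[K] H) :
    TensorProduct.map (sandwich K H) (TensorProduct.lift act.toLinearMap)
      ((TensorProduct.tensorTensorTensorComm K (H ⊗[K] H) H H V) (t ⊗ₜ[K] (f ⊗ₜ[K] u)))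
    = psiMapE f τ t ⊗ₜ[K] u := by
  induction t using TensorProduct.induction_on with
  | zero => simp only [TensorProduct.zero_tmul, map_zero]
  | tmul w z =>
    induction w using TensorProduct.induction_on with
    | zero => simp only [TensorProduct.zero_tmul, map_zero]
    | tmul x y =>
      rw [TensorProduct.tensorTensorTensorComm_tmul]
      simp only [TensorProduct.map_tmul, TensorProduct.lift.tmul, AlgHom.toLinearMap_apply]
      rw [hact z u]
      have hs : sandwich K H ((x ⊗ₜ[K] y) ⊗ₜ[K] f)
          = x * f * HopfAlgebra.antipode (R := K) y := by
        simp only [sandwich, LinearMap.coe_comp, Function.comp_apply, LinearEquiv.coe_coe,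
          TensorProduct.assoc_tmul, LinearMap.lTensor_tmul, TensorProduct.comm_tmul,
          LinearMap.mul'_apply, mul_assoc]
      rw [hs, psiMapE_tmul, tmul_smul, ← smul_tmul']
    | add a b ha hb =>
      rw [TensorProduct.add_tmul, TensorProduct.add_tmul, map_add, map_add, map_add,
        TensorProduct.add_tmul, ha, hb]
  | add a b ha hb =>
    rw [TensorProduct.add_tmul, map_add, map_add, map_add, TensorProduct.add_tmul, ha, hb]

lemma E_of_yd (s : YDStr K H V) (v₀ : V) (π : V →ₗ[K] K) (hπ1 : π v₀ = 1)
    (τ : H →ₐ[K] K) (hact : ∀ (h : H) (w : V), s.act h w = τ h • w)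
    {f : H} (hco : s.coact v₀ = f ⊗ₜ[K] v₀) :
    ∀ h : H, Efun K H f τ h = τ h • f := by
  intro h
  have key := LinearMap.congr_fun s.yd (h ⊗ₜ[K] v₀)
  simp only [LinearMap.coe_comp, Function.comp_apply, LinearEquiv.coe_coe,
    TensorProduct.map_tmul, TensorProduct.lift.tmul, AlgHom.toLinearMap_apply] at key
  rw [hact h v₀, map_smul, hco, yd_rhs_eval s.act τ hact f v₀ (deltaYD K H h)] at key
  rw [smul_tmul'] at key
  exact (tmul_right_inj π hπ1 key).symm

lemma rhoR_eq (R : H ⊗[K] H) (s : YDStr K H V) (τ : H →ₐ[K] K)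
    (hact : ∀ (h : H) (w : V), s.act h w = τ h • w) (v : V) (f : H)
    (hco : s.coact v = f ⊗ₜ[K] v) :
    rhoR K H R s v = (f * HopfAlgebra.antipode (R := K) (tauCol τ R)) ⊗ₜ[K] v := by
  rw [rhoR]
  simp only [LinearMap.coe_comp, Function.comp_apply, LinearEquiv.coe_coe, hco]
  have base : ∀ x : H ⊗[K] H,
      (TensorProduct.map
          ((LinearMap.mul' K H) ∘ₗ (LinearMap.lTensor H (HopfAlgebra.antipode (R := K))))
          ((TensorProduct.lift s.act.toLinearMap) ∘ₗ (TensorProduct.comm K V H).toLinearMap))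
        ((TensorProduct.tensorTensorTensorComm K H V H H)
          ((LinearMap.lTensor (H ⊗[K] V) (TensorProduct.comm K H H).toLinearMap)
            ((f ⊗ₜ[K] v) ⊗ₜ[K] x)))
      = (f * HopfAlgebra.antipode (R := K) (tauCol τ x)) ⊗ₜ[K] v := by
    intro x
    induction x using TensorProduct.induction_on with
    | zero => simp
    | tmul a b =>
      simp only [LinearMap.lTensor_tmul,
        LinearEquiv.coe_coe, TensorProduct.comm_tmul,
        TensorProduct.tensorTensorTensorComm_tmul, TensorProduct.map_tmul,
        LinearMap.coe_comp, Function.comp_apply, LinearMap.mul'_apply,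
        TensorProduct.lift.tmul, AlgHom.toLinearMap_apply, tauCol_tmul]
      rw [hact a v, map_smul, tmul_smul, smul_tmul', mul_smul_comm]
    | add a b ha hb =>
      simp only [TensorProduct.tmul_add, map_add, ha, hb, mul_add, TensorProduct.add_tmul]
  exact base R

end YDaux
end


open Coalgebra HopfAlgebra YDaux

/-- **Statement 17.** For a quasi-triangular Hopf algebra `(H,R)` the one-dimensional
Yetter–Drinfeld modules are classified by pairs consisting of a central grouplike
element of `H` and a one-dimensional `H`-module (an algebra map `H → k`):
every one-dimensional `V ∈ ᴴᴴYD` has `ρ_R(v) = g ⊗ v` for a unique central grouplike `g`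
and action given by a unique algebra map `H → k`; every such pair arises this way; and
two one-dimensional Yetter–Drinfeld modules are isomorphic iff their pairs coincide. -/
theorem one_dimensional_yd_classification
    (R : H ⊗[K] H) (hR : IsQuasiTriangular K H R) :
    (∀ (V : Type) [AddCommGroup V] [Module K V] (s : YDStr K H V),
      Module.finrank K V = 1 →
        ∃! p : H × (H →ₐ[K] K), IsCentralGrouplike K H p.1 ∧
          (∀ v : V, rhoR K H R s v = p.1 ⊗ₜ v) ∧
          (∀ (h : H) (v : V), s.act h v = p.2 h • v)) ∧
    (∀ g : H, IsCentralGrouplike K H g → ∀ τ : H →ₐ[K] K,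
        ∃ s : YDStr K H K,
          (∀ c : K, rhoR K H R s c = g ⊗ₜ c) ∧
          (∀ (h : H) (c : K), s.act h c = τ h * c)) ∧
    (∀ (V V' : Type) [AddCommGroup V] [Module K V] [AddCommGroup V'] [Module K V']
        (s : YDStr K H V) (s' : YDStr K H V'),
        Module.finrank K V = 1 → Module.finrank K V' = 1 →
        ∀ (g g' : H) (τ τ' : H →ₐ[K] K),
          IsCentralGrouplike K H g → IsCentralGrouplike K H g' →
          (∀ v : V, rhoR K H R s v = g ⊗ₜ v) →
          (∀ (h : H) (v : V), s.act h v = τ h • v) →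
          (∀ v : V', rhoR K H R s' v = g' ⊗ₜ v) →
          (∀ (h : H) (v : V'), s'.act h v = τ' h • v) →
          (YDIsomorphic K H s s' ↔ (g = g' ∧ τ = τ'))) := by
  refine ⟨?_, ?_, ?_⟩
  · -- Part 1
    intro V _ _ s hV
    obtain ⟨v₀, π, hπ1, hπ⟩ := one_dim_pack hV
    set τ := charOf s v₀ π hπ1 hπ with hτdef
    have hact := charOf_act s v₀ π hπ1 hπ
    set f := (TensorProduct.rid K H) ((LinearMap.lTensor H π) (s.coact v₀)) with hfdef
    have hco : s.coact v₀ = f ⊗ₜ[K] v₀ := vec_decomp hπ (s.coact v₀)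
    have hfε : Coalgebra.counit (R := K) f = 1 := counit_f s v₀ π hπ1 hco
    have hfΔ : Coalgebra.comul (R := K) f = f ⊗ₜ[K] f := comul_f s v₀ π hπ1 hco
    have twf := tw_of_E (E_of_yd s v₀ π hπ1 τ hact hco)
    have vΔ := comul_v hR τ
    have vε := counit_v hR τ
    have tww := phi_mul_v hR τ
    set w := tauCol τ R with hwdef
    set g := f * HopfAlgebra.antipode (R := K) w with hgdef
    have hgΔ : Coalgebra.comul (R := K) g = g ⊗ₜ[K] g :=
      comul_grouplike_mul hfΔ (comul_grouplike_antipode vΔ vε)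
    have hgε : Coalgebra.counit (R := K) g = 1 :=
      counit_grouplike_mul hfε (counit_grouplike_antipode vΔ vε)
    have hgc : ∀ h : H, g * h = h * g := central_of_tw vΔ vε twf tww
    have hrho : ∀ v : V, rhoR K H R s v = g ⊗ₜ[K] v := by
      intro v
      have h0 := rhoR_eq R s τ hact v₀ f hco
      calc rhoR K H R s v = rhoR K H R s (π v • v₀) := by rw [hπ v]
        _ = π v • rhoR K H R s v₀ := map_smul _ _ _
        _ = π v • (g ⊗ₜ[K] v₀) := by rw [h0, hgdef]
        _ = g ⊗ₜ[K] (π v • v₀) := by rw [tmul_smul]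
        _ = g ⊗ₜ[K] v := by rw [hπ v]
    refine ⟨(g, τ), ⟨⟨hgΔ, hgε, hgc⟩, hrho, fun h v => hact h v⟩, ?_⟩
    rintro ⟨g', τ'⟩ ⟨_, hrho', hact'⟩
    have hg' : g' = g := tmul_right_inj π hπ1 ((hrho' v₀).symm.trans (hrho v₀))
    have hτ' : τ' = τ := by
      ext h
      exact smul_right_inj π hπ1 (by rw [← hact' h v₀, hact h v₀])
    rw [hg', hτ']
  · -- Part 2
    intro g hg τ
    set w := tauCol τ R with hwdef
    have vΔ := comul_v hR τ
    have vε := counit_v hR τ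
    have tww := phi_mul_v hR τ
    set f := g * w with hfdef
    have hfΔ : Coalgebra.comul (R := K) f = f ⊗ₜ[K] f := comul_grouplike_mul hg.1 vΔ
    have hfε : Coalgebra.counit (R := K) f = 1 := counit_grouplike_mul hg.2.1 vε
    have twf : ∀ h, phi τ h * f = f * psi τ h := by
      intro h
      calc phi τ h * (g * w) = (phi τ h * g) * w := by rw [mul_assoc]
        _ = (g * phi τ h) * w := by rw [(hg.2.2 (phi τ h)).symm]
        _ = g * (phi τ h * w) := by rw [mul_assoc]
        _ = g * (w * psi τ h) := by rw [tww h]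
        _ = (g * w) * psi τ h := by rw [mul_assoc]
    have hE := E_of_tw twf
    set act0 : H →ₐ[K] Module.End K K := (Algebra.ofId K (Module.End K K)).comp τ with hact0
    have hact : ∀ (h : H) (c : K), act0 h c = τ h • c := by
      intro h c
      simp [hact0, Algebra.ofId_apply, Module.algebraMap_end_apply]
    have hax1 : ∀ c : K, (TensorProduct.lid K K)
        ((LinearMap.rTensor K (Coalgebra.counit (R := K)))
          (TensorProduct.mk K H K f c)) = c := by
      intro c
      simp only [TensorProduct.mk_apply, LinearMap.rTensor_tmul, TensorProduct.lid_tmul, hfε,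
        one_smul]
    have hax2 : (LinearMap.rTensor K (Coalgebra.comul (R := K))) ∘ₗ TensorProduct.mk K H K f
        = (TensorProduct.assoc K H H K).symm.toLinearMap ∘ₗ
          (LinearMap.lTensor H (TensorProduct.mk K H K f)) ∘ₗ TensorProduct.mk K H K f := by
      apply LinearMap.ext
      intro c
      simp only [LinearMap.coe_comp, Function.comp_apply, TensorProduct.mk_apply,
        LinearMap.rTensor_tmul, hfΔ, LinearMap.lTensor_tmul, LinearEquiv.coe_coe,
        TensorProduct.assoc_symm_tmul]
    have hax3 : TensorProduct.mk K H K f ∘ₗ (TensorProduct.lift act0.toLinearMap)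
        = (TensorProduct.map (sandwich K H) (TensorProduct.lift act0.toLinearMap)) ∘ₗ
          (TensorProduct.tensorTensorTensorComm K (H ⊗[K] H) H H K).toLinearMap ∘ₗ
          (TensorProduct.map (deltaYD K H) (TensorProduct.mk K H K f)) := by
      apply TensorProduct.ext'
      intro h c
      simp only [LinearMap.coe_comp, Function.comp_apply, LinearEquiv.coe_coe,
        TensorProduct.lift.tmul, AlgHom.toLinearMap_apply, TensorProduct.map_tmul,
        TensorProduct.mk_apply]
      rw [hact h c, yd_rhs_eval act0 τ hact f c (deltaYD K H h),
        show psiMapE f τ (deltaYD K H h) = τ h • f from hE h, tmul_smul, smul_tmul']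
    refine ⟨⟨act0, TensorProduct.mk K H K f, hax1, hax2, hax3⟩, ?_, ?_⟩
    · intro c
      rw [rhoR_eq R ⟨act0, TensorProduct.mk K H K f, hax1, hax2, hax3⟩ τ hact c f rfl]
      congr 1
      calc f * HopfAlgebra.antipode (R := K) w
          = g * (w * HopfAlgebra.antipode (R := K) w) := by rw [hfdef, mul_assoc]
        _ = g := by rw [self_mul_antipode vΔ vε, mul_one]
    · intro h c
      rw [show (⟨act0, TensorProduct.mk K H K f, hax1, hax2, hax3⟩ : YDStr K H K).act = act0
        from rfl, hact h c, smul_eq_mul]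
  · -- Part 3
    intro V V' _ _ _ _ s s' hV hV' g g' τ τ' hg hg' hρ hact hρ' hact'
    obtain ⟨v₀, π, hπ1, hπ⟩ := one_dim_pack hV
    obtain ⟨v₀', π', hπ1', hπ'⟩ := one_dim_pack hV'
    set f := (TensorProduct.rid K H) ((LinearMap.lTensor H π) (s.coact v₀)) with hfdef
    have hco : s.coact v₀ = f ⊗ₜ[K] v₀ := vec_decomp hπ (s.coact v₀)
    set f' := (TensorProduct.rid K H) ((LinearMap.lTensor H π') (s'.coact v₀')) with hfdef'
    have hco' : s'.coact v₀' = f' ⊗ₜ[K] v₀' := vec_decomp hπ' (s'.coact v₀')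
    have hgf : g = f * HopfAlgebra.antipode (R := K) (tauCol τ R) :=
      tmul_right_inj π hπ1 ((hρ v₀).symm.trans (rhoR_eq R s τ hact v₀ f hco))
    have hgf' : g' = f' * HopfAlgebra.antipode (R := K) (tauCol τ' R) :=
      tmul_right_inj π' hπ1' ((hρ' v₀').symm.trans (rhoR_eq R s' τ' hact' v₀' f' hco'))
    constructor
    · rintro ⟨e, he1, he2⟩
      set c := π' (e v₀) with hcdef
      have hev : e v₀ = c • v₀' := (hπ' (e v₀)).symm
      have hc0 : c ≠ 0 := by
        intro h0
        have h1 : e v₀ = 0 := by rw [hev, h0, zero_smul]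
        have h2 : v₀ = (0 : V) := by
          apply e.injective
          rw [h1, map_zero]
        rw [h2, map_zero] at hπ1
        exact one_ne_zero hπ1.symm
      have hπ'' : (c⁻¹ • π') (e v₀) = 1 := by
        rw [LinearMap.smul_apply, ← hcdef, smul_eq_mul, inv_mul_cancel₀ hc0]
      have hτ : τ = τ' := by
        ext h
        have h1 : e (s.act h v₀) = s'.act h (e v₀) := he1 h v₀
        rw [hact, hact', map_smul] at h1
        exact smul_right_inj (c⁻¹ • π') hπ'' h1
      have hff : f = f' := by
        have h2 := LinearMap.congr_fun he2 v₀
        simp only [LinearMap.coe_comp, Function.comp_apply, LinearEquiv.coe_toLinearMap,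
          hco, LinearMap.lTensor_tmul] at h2
        have h3 : s'.coact (e v₀) = f' ⊗ₜ[K] (e v₀) := by
          rw [hev, map_smul, hco', tmul_smul]
        rw [h3] at h2
        exact tmul_right_inj (c⁻¹ • π') hπ'' h2
      refine ⟨?_, hτ⟩
      rw [hgf, hgf', hff, hτ]
    · rintro ⟨hgg, hττ⟩
      have vΔ := comul_v hR τ
      have vε := counit_v hR τ
      have hff : f = f' := by
        have h1 : f * HopfAlgebra.antipode (R := K) (tauCol τ R)
            = f' * HopfAlgebra.antipode (R := K) (tauCol τ R) := by
          rw [← hgf, hgg, hgf', hττ]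
        calc f = f * (HopfAlgebra.antipode (R := K) (tauCol τ R) * tauCol τ R) := by
              rw [antipode_mul_self vΔ vε, mul_one]
          _ = (f * HopfAlgebra.antipode (R := K) (tauCol τ R)) * tauCol τ R := by
              rw [mul_assoc]
          _ = (f' * HopfAlgebra.antipode (R := K) (tauCol τ R)) * tauCol τ R := by rw [h1]
          _ = f' * (HopfAlgebra.antipode (R := K) (tauCol τ R) * tauCol τ R) := by
              rw [mul_assoc]
          _ = f' := by rw [antipode_mul_self vΔ vε, mul_one]
      have h12 : (LinearMap.toSpanSingleton K V' v₀' ∘ₗ π) ∘ₗ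
          (LinearMap.toSpanSingleton K V v₀ ∘ₗ π') = LinearMap.id := by
        apply LinearMap.ext
        intro u
        simp only [LinearMap.coe_comp, Function.comp_apply, LinearMap.toSpanSingleton_apply,
          map_smul, hπ1, smul_eq_mul, mul_one, LinearMap.id_coe, id_eq]
        exact hπ' u
      have h21 : (LinearMap.toSpanSingleton K V v₀ ∘ₗ π') ∘ₗ
          (LinearMap.toSpanSingleton K V' v₀' ∘ₗ π) = LinearMap.id := by
        apply LinearMap.ext
        intro u
        simp only [LinearMap.coe_comp, Function.comp_apply, LinearMap.toSpanSingleton_apply,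
          map_smul, hπ1', smul_eq_mul, mul_one, LinearMap.id_coe, id_eq]
        exact hπ u
      set e : V ≃ₗ[K] V' := LinearEquiv.ofLinear (LinearMap.toSpanSingleton K V' v₀' ∘ₗ π)
        (LinearMap.toSpanSingleton K V v₀ ∘ₗ π') h12 h21 with hedef
      have heapp : ∀ v : V, e v = π v • v₀' := by
        intro v
        simp [hedef, LinearEquiv.ofLinear_apply, LinearMap.toSpanSingleton_apply]
      have hev0 : e v₀ = v₀' := by rw [heapp, hπ1, one_smul]
      refine ⟨e, ?_, ?_⟩
      · intro h v
        rw [hact h v, hact', ← hττ, map_smul, heapp]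
      · apply LinearMap.ext
        intro v
        simp only [LinearMap.coe_comp, Function.comp_apply, LinearEquiv.coe_toLinearMap]
        conv_lhs => rw [← hπ v, map_smul, map_smul]
        conv_rhs => rw [← hπ v, map_smul, map_smul]
        congr 1
        rw [hco, LinearMap.lTensor_tmul]
        simp only [LinearEquiv.coe_toLinearMap]
        rw [hev0, hco', hff]
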